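/- Let Γ be a set, N an equivalent norm on c₀(Γ) that is solid and normalized (N(e_γ) = 1 for all γ ∈ Γ), α ∈ Γ, K > 1, and l > 1 such that N(e_α + (1/K)·e_β) ≥ l for every β ≠ α. Let η be a real number with (K + 1)/(l·K + 1) < η < 1. Then there exists 𝔞 < 1/K such that for every β ∈ Γ with β ≠ α and every a ∈ ℝ with N(η·e_α + a·e_β) ≤ 1, one has |a| ≤ 𝔞. -/

import Mathlib

open Classical in
/-- The unit vector (indicator of `{γ}`) in the space of real functions on `Γ`. -/
noncomputable def eVec {Γ : Type*} (γ : Γ) : Γ → ℝ := fun δ => if δ = γ then 1 else 0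

/-- Membership in `c₀(Γ)`: functions vanishing at infinity. -/
def IsC0 {Γ : Type*} (x : Γ → ℝ) : Prop := ∀ ε : ℝ, 0 < ε → {γ | ε ≤ |x γ|}.Finite

/-- The supremum norm of a function on `Γ`. -/
noncomputable def supNorm {Γ : Type*} (x : Γ → ℝ) : ℝ := ⨆ γ, |x γ|

lemma isC0_comb {Γ : Type*} (c d : ℝ) (α β : Γ) : IsC0 (c • eVec α + d • eVec β) := by
  intro ε hε
  apply Set.Finite.subset ((Set.finite_singleton β).insert α)
  intro γ hγ
  simp only [Set.mem_setOf_eq] at hγ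
  by_contra h
  simp only [Set.mem_insert_iff, Set.mem_singleton_iff, not_or] at h
  simp [eVec, h.1, h.2] at hγ
  linarith

lemma isC0_eVec {Γ : Type*} (α : Γ) : IsC0 (eVec α) := by
  have h := isC0_comb (Γ := Γ) 1 0 α α
  have : (1:ℝ) • eVec α + (0:ℝ) • eVec α = eVec α := by
    funext γ; simp
  rwa [this] at h

lemma isC0_smul {Γ : Type*} (c : ℝ) {x : Γ → ℝ} (h : IsC0 x) : IsC0 (c • x) := by
  intro ε hε
  rcases eq_or_ne c 0 with rfl | hc
  · apply Set.Finite.subset (Set.finite_empty)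
    intro γ hγ
    simp only [Set.mem_setOf_eq, Pi.smul_apply, zero_smul, abs_zero] at hγ
    linarith
  · apply Set.Finite.subset (h (ε / |c|) (by positivity))
    intro γ hγ
    simp only [Set.mem_setOf_eq, Pi.smul_apply, smul_eq_mul, abs_mul] at hγ ⊢
    rw [div_le_iff₀ (by positivity)]
    linarith [hγ]

/-- Let `N` be an equivalent solid normalized norm on `c₀(Γ)`, `α ∈ Γ`, `K > 1` and
`l > 1` with `N (e_α + (1/K) e_β) ≥ l` for all `β ≠ α`, and let
`(K+1)/(lK+1) < η < 1`.  Then there is `𝔞 < 1/K` such that whenever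
`N (η e_α + a e_β) ≤ 1` for some `β ≠ α`, one has `|a| ≤ 𝔞`. -/
theorem claim_bound_on_coordinates
    {Γ : Type*} (N : (Γ → ℝ) → ℝ)
    (hzero : ∀ x : Γ → ℝ, IsC0 x → (N x = 0 ↔ x = 0))
    (hsmul : ∀ (a : ℝ) (x : Γ → ℝ), IsC0 x → N (a • x) = |a| * N x)
    (htri : ∀ x y : Γ → ℝ, IsC0 x → IsC0 y → N (x + y) ≤ N x + N y)
    (hequiv : ∃ c C : ℝ, 0 < c ∧ 0 < C ∧ ∀ x : Γ → ℝ, IsC0 x →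
      c * supNorm x ≤ N x ∧ N x ≤ C * supNorm x)
    (hsolid : ∀ x y : Γ → ℝ, IsC0 x → IsC0 y → (∀ γ, |x γ| ≤ |y γ|) → N x ≤ N y)
    (hnormalized : ∀ γ : Γ, N (eVec γ) = 1)
    (α : Γ) (K l : ℝ) (hK : 1 < K) (hl : 1 < l)
    (hinf : ∀ β : Γ, β ≠ α → l ≤ N (eVec α + (1 / K) • eVec β))
    (η : ℝ) (hη₁ : (K + 1) / (l * K + 1) < η) (hη₂ : η < 1) :
    ∃ a₀ : ℝ, a₀ < 1 / K ∧
      ∀ β : Γ, β ≠ α → ∀ a : ℝ, N (η • eVec α + a • eVec β) ≤ 1 → |a| ≤ a₀ := by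
  have hK0 : (0:ℝ) < K := by linarith
  have hlK : (0:ℝ) < l * K + 1 := by nlinarith
  have hη0 : 0 < η := lt_trans (by positivity) hη₁
  have hηK : η * (l * K + 1) > K + 1 := by
    rw [div_lt_iff₀ hlK] at hη₁; linarith
  have h2l : 2 - l < η := by nlinarith [sq_nonneg (l - 1)]
  have hl1 : (0:ℝ) < l - 1 := by linarith
  refine ⟨max (η / K) ((1 - η) / ((l - 1) * K)), ?_, ?_⟩
  · apply max_lt
    · rw [div_lt_div_iff₀ hK0 hK0]; nlinarith
    · rw [div_lt_div_iff₀ (by positivity) hK0]; nlinarith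
  · intro β hβ a hNa
    set b := |a| with hbdef
    have hb0 : 0 ≤ b := abs_nonneg a
    have hNb : N (η • eVec α + b • eVec β) ≤ 1 := by
      refine le_trans (hsolid _ _ (isC0_comb _ _ _ _) (isC0_comb _ _ _ _) ?_) hNa
      intro γ
      by_cases h1 : γ = α
      · subst h1; simp [eVec, Ne.symm hβ]
      · by_cases h2 : γ = β
        · subst h2; simp [eVec, h1, hbdef, abs_abs]
        · simp [eVec, h1, h2]
    rcases le_or_gt b (η / K) with hcase | hcase
    · exact le_max_of_le_left hcase
    · have hbpos : 0 < b := lt_of_le_of_lt (by positivity) hcase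
      have hbK0 : 0 < b * K := by positivity
      have hbK : η < b * K := by rwa [div_lt_iff₀ hK0] at hcase
      have hdecomp : eVec α + (1 / K) • eVec β
          = (1 / (b * K)) • (η • eVec α + b • eVec β) + ((1 - η / (b * K)) • eVec α) := by
        funext γ
        by_cases h1 : γ = α
        · subst h1
          simp only [Pi.add_apply, Pi.smul_apply, eVec, if_pos rfl, if_neg (Ne.symm hβ),
            smul_eq_mul]
          field_simp
          simp only [if_pos trivial]; ring
        · by_cases h2 : γ = β
          · subst h2
            simp only [Pi.add_apply, Pi.smul_apply, eVec, if_neg h1, if_pos rfl, smul_eq_mul]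
            field_simp
            simp only [if_pos trivial]; ring
          · simp [eVec, h1, h2]
      have hfrac : 0 ≤ 1 - η / (b * K) := by
        have : η / (b * K) < 1 := by rw [div_lt_one hbK0]; exact hbK
        linarith
      have h1 := hinf β hβ
      rw [hdecomp] at h1
      have h2 := htri ((1 / (b * K)) • (η • eVec α + b • eVec β))
          ((1 - η / (b * K)) • eVec α)
          (isC0_smul _ (isC0_comb η b α β)) (isC0_smul _ (isC0_eVec α))
      have h3 : N ((1 / (b * K)) • (η • eVec α + b • eVec β))
          = (1 / (b * K)) * N (η • eVec α + b • eVec β) := by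
        rw [hsmul _ _ (isC0_comb η b α β), abs_of_pos (by positivity)]
      have h4 : N ((1 - η / (b * K)) • eVec α) = 1 - η / (b * K) := by
        rw [hsmul _ _ (isC0_eVec α), abs_of_nonneg hfrac, hnormalized α, mul_one]
      have hN0 : N (0 : Γ → ℝ) = 0 := by
        have h := hsmul 0 (η • eVec α + b • eVec β) (isC0_comb η b α β)
        simpa using h
      have hzc : IsC0 (0 : Γ → ℝ) := by
        have h := isC0_smul 0 (isC0_comb η b α β)
        simpa using h
      have hNpos : 0 ≤ N (η • eVec α + b • eVec β) := by
        have h := hsolid 0 (η • eVec α + b • eVec β) hzc (isC0_comb η b α β)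
          (fun γ => by simp [abs_nonneg])
        linarith
      have hkey : l ≤ 1 / (b * K) + (1 - η / (b * K)) := by
        have : l ≤ 1 / (b * K) * N (η • eVec α + b • eVec β) + (1 - η / (b * K)) := by
          rw [h3, h4] at h2; linarith
        have hmono : 1 / (b * K) * N (η • eVec α + b • eVec β) ≤ 1 / (b * K) * 1 :=
          mul_le_mul_of_nonneg_left hNb (by positivity)
        linarith
      have hmul : l * (b * K) ≤ (1 / (b * K) + (1 - η / (b * K))) * (b * K) :=
        mul_le_mul_of_nonneg_right hkey hbK0.le
      have heq : (1 / (b * K) + (1 - η / (b * K))) * (b * K) = 1 + b * K - η := by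
        field_simp; ring
      rw [heq] at hmul
      have hfinal : b ≤ (1 - η) / ((l - 1) * K) := by
        rw [le_div_iff₀ (by positivity)]
        nlinarith
      exact le_max_of_le_right hfinal
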